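/- arXiv:1312.6147 — 2 statements merged into one kernel-verified Lean document; each statement's English description precedes it below -/
import Mathlib

section
/- Bihari's inequality: Let ρ : [0,∞) → [0,∞) be continuous, non-decreasing, and strictly positive on (0,∞). Fix x₀ > 0 and define G(x) := ∫_{x₀}^{x} 1/ρ(y) dy for x > 0. Let g, h, λ : [0,∞) → [0,∞) be continuous functions such that g(t) ≤ h(t) + ∫₀^t λ(s) ρ(g(s)) ds for all t ≥ 0, and set h*(t) := sup_{0 ≤ s ≤ t} h(s), assumed strictly positive. Then for every t ≥ 0 and every y > 0 satisfying G(h*(t)) + ∫₀^t λ(s) ds ≤ G(y), one has g(t) ≤ y (equivalently, g(t) ≤ G⁻¹(G(h*(t)) + ∫₀^t λ(s) ds) whenever this quantity lies in the range of G). -/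
open MeasureTheory Set intervalIntegral

/-- **Bihari's inequality.** Let `ρ : [0,∞) → [0,∞)` be continuous, non-decreasing and
strictly positive on `(0,∞)`. Fix `x₀ > 0` and define `G x = ∫_{x₀}^{x} 1/ρ(y) dy` for `x > 0`.
If continuous nonnegative functions `g, h, lam` satisfy
`g t ≤ h t + ∫₀ᵗ lam s * ρ (g s) ds` for all `t ≥ 0`, and `h* t := sup_{0 ≤ s ≤ t} h s > 0`,
then for every `t ≥ 0` and every `y > 0` with `G (h* t) + ∫₀ᵗ lam s ds ≤ G y`
one has `g t ≤ y`. -/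
theorem bihari_inequality
    (ρ g h lam : ℝ → ℝ)
    (hρ_cont : ContinuousOn ρ (Ici 0))
    (hρ_mono : MonotoneOn ρ (Ici 0))
    (hρ_nonneg : ∀ y ≥ (0:ℝ), 0 ≤ ρ y)
    (hρ_pos : ∀ y > (0:ℝ), 0 < ρ y)
    (x₀ : ℝ) (hx₀ : 0 < x₀)
    (G : ℝ → ℝ)
    (hG : ∀ x > (0:ℝ), G x = ∫ y in x₀..x, 1 / ρ y)
    (hg_cont : Continuous g) (hh_cont : Continuous h) (hlam_cont : Continuous lam)
    (hg_nonneg : ∀ t ≥ (0:ℝ), 0 ≤ g t)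
    (hh_nonneg : ∀ t ≥ (0:ℝ), 0 ≤ h t)
    (hlam_nonneg : ∀ t ≥ (0:ℝ), 0 ≤ lam t)
    (hineq : ∀ t ≥ (0:ℝ), g t ≤ h t + ∫ s in (0:ℝ)..t, lam s * ρ (g s))
    (hstar : ℝ → ℝ)
    (hhstar : ∀ t ≥ (0:ℝ), hstar t = sSup (h '' Icc 0 t))
    (hhstar_pos : ∀ t ≥ (0:ℝ), 0 < hstar t) :
    ∀ t ≥ (0:ℝ), ∀ y > (0:ℝ),
      G (hstar t) + (∫ s in (0:ℝ)..t, lam s) ≤ G y → g t ≤ y := by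
  -- Extended versions of the functions, continuous on all of ℝ
  have hmax : Continuous (fun x : ℝ => max x 0) := continuous_id.max continuous_const
  set ρ' : ℝ → ℝ := fun y => ρ (max y 0) with hρ'def
  have hρ'cont : Continuous ρ' :=
    hρ_cont.comp_continuous hmax (fun x => mem_Ici.mpr (le_max_right x 0))
  have hρ'eq : ∀ y : ℝ, 0 ≤ y → ρ' y = ρ y := by
    intro y hy; simp [hρ'def, max_eq_left hy]
  have hρ'nonneg : ∀ y, 0 ≤ ρ' y := fun y => hρ_nonneg _ (le_max_right _ _)
  -- continuity & integrability of 1/ρ on positive intervals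
  have hinv_cont : ContinuousOn (fun y => 1 / ρ y) (Ioi 0) := by
    apply ContinuousOn.div continuousOn_const (hρ_cont.mono Ioi_subset_Ici_self)
    exact fun z hz => (hρ_pos z hz).ne'
  have hint : ∀ a : ℝ, 0 < a → ∀ b : ℝ, 0 < b →
      IntervalIntegrable (fun y => 1 / ρ y) volume a b := by
    intro a ha b hb
    apply ContinuousOn.intervalIntegrable
    exact hinv_cont.mono (fun z hz => lt_of_lt_of_le (lt_min ha hb) hz.1)
  -- G is strictly increasing on positive reals
  have hGmono : ∀ a : ℝ, 0 < a → ∀ b : ℝ, a < b → G a < G b := by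
    intro a ha b hab
    have hb : 0 < b := ha.trans hab
    rw [hG a ha, hG b hb]
    have h1 := hint x₀ hx₀ a ha
    have h2 := hint a ha b hb
    have hsum : (∫ y in x₀..a, 1 / ρ y) + ∫ y in a..b, 1 / ρ y = ∫ y in x₀..b, 1 / ρ y :=
      intervalIntegral.integral_add_adjacent_intervals h1 h2
    have hpos : 0 < ∫ y in a..b, 1 / ρ y := by
      apply intervalIntegral.intervalIntegral_pos_of_pos_on h2
      · intro z hz; exact one_div_pos.mpr (hρ_pos z (ha.trans hz.1))
      · exact hab
    linarith
  -- derivative of G on positive reals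
  have hGdiff : ∀ x : ℝ, 0 < x → HasDerivAt G (1 / ρ x) x := by
    intro x hx
    have hd : HasDerivAt (fun u => ∫ y in x₀..u, 1 / ρ y) (1 / ρ x) x := by
      apply intervalIntegral.integral_hasDerivAt_right (hint x₀ hx₀ x hx)
      · exact ContinuousOn.stronglyMeasurableAtFilter isOpen_Ioi hinv_cont x hx
      · exact (hinv_cont x hx).continuousAt (Ioi_mem_nhds hx)
    apply hd.congr_of_eventuallyEq
    filter_upwards [Ioi_mem_nhds hx] with z hz
    exact hG z hz
  -- main argument
  intro T hT y hy hGy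
  have hHpos : 0 < hstar T := hhstar_pos T hT
  set H := hstar T with hHdef
  set lam' : ℝ → ℝ := fun s => lam (max s 0) with hlam'def
  set g' : ℝ → ℝ := fun s => g (max s 0) with hg'def
  have hlam'cont : Continuous lam' := hlam_cont.comp hmax
  have hg'cont : Continuous g' := hg_cont.comp hmax
  have hlam'nonneg : ∀ s, 0 ≤ lam' s := fun s => hlam_nonneg _ (le_max_right _ _)
  set F : ℝ → ℝ := fun s => lam' s * ρ' (g' s) with hFdef
  have hFcont : Continuous F := hlam'cont.mul (hρ'cont.comp hg'cont)
  have hFnonneg : ∀ s, 0 ≤ F s := fun s => mul_nonneg (hlam'nonneg s) (hρ'nonneg _)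
  set u : ℝ → ℝ := fun t => H + ∫ s in (0:ℝ)..t, F s with hudef
  have hu_deriv : ∀ t : ℝ, HasDerivAt u (F t) t := by
    intro t
    have hd : HasDerivAt (fun t => ∫ s in (0:ℝ)..t, F s) (F t) t := by
      apply intervalIntegral.integral_hasDerivAt_right (hFcont.intervalIntegrable 0 t)
      · exact hFcont.stronglyMeasurableAtFilter _ _
      · exact hFcont.continuousAt
    exact hd.const_add H
  have hu0 : u 0 = H := by simp [hudef]
  have huH : ∀ t : ℝ, 0 ≤ t → H ≤ u t := by
    intro t ht
    have : 0 ≤ ∫ s in (0:ℝ)..t, F s :=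
      intervalIntegral.integral_nonneg ht (fun s _ => hFnonneg s)
    simp [hudef]; linarith
  have hupos : ∀ t : ℝ, 0 ≤ t → 0 < u t := fun t ht => lt_of_lt_of_le hHpos (huH t ht)
  -- g ≤ u on [0, T]
  have hgu : ∀ t ∈ Icc (0:ℝ) T, g t ≤ u t := by
    intro t ht
    have h1 : g t ≤ h t + ∫ s in (0:ℝ)..t, lam s * ρ (g s) := hineq t ht.1
    have heq : (∫ s in (0:ℝ)..t, lam s * ρ (g s)) = ∫ s in (0:ℝ)..t, F s := by
      apply intervalIntegral.integral_congr
      intro s hs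
      rw [Set.uIcc_of_le ht.1] at hs
      have hs0 : 0 ≤ s := hs.1
      simp [hFdef, hlam'def, hg'def, hρ'def, max_eq_left hs0, max_eq_left (hg_nonneg s hs0)]
    have hht : h t ≤ H := by
      rw [hHdef, hhstar T hT]
      exact le_csSup ((isCompact_Icc.image_of_continuousOn hh_cont.continuousOn).bddAbove)
        ⟨t, ht, rfl⟩
    rw [heq] at h1
    calc g t ≤ h t + ∫ s in (0:ℝ)..t, F s := h1
      _ ≤ H + ∫ s in (0:ℝ)..t, F s := by linarith
      _ = u t := rfl
  -- the comparison function Ψ is monotone on [0, T]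
  set L : ℝ → ℝ := fun t => ∫ s in (0:ℝ)..t, lam' s with hLdef
  have hL_deriv : ∀ t : ℝ, HasDerivAt L (lam' t) t := by
    intro t
    apply intervalIntegral.integral_hasDerivAt_right (hlam'cont.intervalIntegrable 0 t)
    · exact hlam'cont.stronglyMeasurableAtFilter _ _
    · exact hlam'cont.continuousAt
  set Ψ : ℝ → ℝ := fun t => L t - G (u t) with hΨdef
  have hΨderiv : ∀ t : ℝ, 0 ≤ t → HasDerivAt Ψ (lam' t - 1 / ρ (u t) * F t) t := by
    intro t ht
    exact (hL_deriv t).sub (((hGdiff (u t) (hupos t ht)).comp t (hu_deriv t)))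
  have hΨmono : MonotoneOn Ψ (Icc 0 T) := by
    apply monotoneOn_of_deriv_nonneg (convex_Icc 0 T)
    · intro t ht
      exact ((hΨderiv t ht.1).continuousAt).continuousWithinAt
    · intro t ht
      rw [interior_Icc] at ht
      exact (hΨderiv t ht.1.le).differentiableAt.differentiableWithinAt
    · intro t ht
      rw [interior_Icc] at ht
      rw [(hΨderiv t ht.1.le).deriv]
      have hρu : 0 < ρ (u t) := hρ_pos _ (hupos t ht.1.le)
      have hgt : ρ' (g' t) ≤ ρ (u t) := by
        rw [hg'def]
        simp only [max_eq_left ht.1.le]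
        rw [hρ'eq _ (hg_nonneg t ht.1.le)]
        exact hρ_mono (mem_Ici.mpr (hg_nonneg t ht.1.le))
          (mem_Ici.mpr (hupos t ht.1.le).le) (hgu t ⟨ht.1.le, ht.2.le⟩)
      have hFle : F t ≤ lam' t * ρ (u t) :=
        mul_le_mul_of_nonneg_left hgt (hlam'nonneg t)
      have : 1 / ρ (u t) * F t ≤ lam' t := by
        rw [one_div, inv_mul_le_iff₀ hρu, mul_comm]
        exact hFle
      linarith
  have hkey : Ψ 0 ≤ Ψ T := hΨmono ⟨le_refl 0, hT⟩ ⟨hT, le_refl T⟩ hT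
  have hL0 : L 0 = 0 := by simp [hLdef]
  have hLT : L T = ∫ s in (0:ℝ)..T, lam s := by
    apply intervalIntegral.integral_congr
    intro s hs
    rw [Set.uIcc_of_le hT] at hs
    simp [hlam'def, max_eq_left hs.1]
  -- conclude
  have hGuT : G (u T) ≤ G H + ∫ s in (0:ℝ)..T, lam s := by
    have h2 : L 0 - G (u 0) ≤ L T - G (u T) := hkey
    rw [hL0, hu0, hLT] at h2
    linarith
  have hGuTy : G (u T) ≤ G y := le_trans hGuT hGy
  have huTy : u T ≤ y := by
    by_contra hc
    push_neg at hc
    exact absurd hGuTy (not_le.mpr (hGmono y hy (u T) hc))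
  exact le_trans (hgu T ⟨hT, le_refl T⟩) huTy
end

section
/- For every Hurst parameter H ∈ (1/2, 1) and every T > 0, if ψ : [0,T] → ℝ is measurable with ∫₀^T |ψ(s)|^{1/H} ds < ∞ (i.e. ψ ∈ L^{1/H}([0,T])), then H(2H−1) ∫₀^T ∫₀^T |ψ(s)| |ψ(t)| |t−s|^{2H−2} ds dt < ∞ (i.e. ψ belongs to the space |𝓗|). -/
open MeasureTheory Set ENNReal

namespace AbsHAux

lemma lint_Ioc_rpow_right {β : ℝ} (hβ : -1 < β) {a : ℝ} (ha : 0 ≤ a) (b : ℝ) :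
    ∫⁻ s in Ioc b (b + a), ENNReal.ofReal ((s - b) ^ β)
      = ENNReal.ofReal (a ^ (β + 1) / (β + 1)) := by
  have hle : b ≤ b + a := by linarith
  have hii : IntervalIntegrable (fun x : ℝ => (x - b) ^ β) volume b (b + a) := by
    have h := (intervalIntegral.intervalIntegrable_rpow' (r := β) (a := 0) (b := a) hβ).comp_sub_right b
    simpa [add_comm] using h
  have hint : IntegrableOn (fun x : ℝ => (x - b) ^ β) (Ioc b (b + a)) :=
    (intervalIntegrable_iff_integrableOn_Ioc_of_le hle).1 hii
  have hnn : 0 ≤ᵐ[volume.restrict (Ioc b (b + a))] fun x : ℝ => (x - b) ^ β := by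
    refine (ae_restrict_iff' measurableSet_Ioc).2 (Filter.Eventually.of_forall fun x hx => ?_)
    exact Real.rpow_nonneg (by linarith [hx.1]) β
  rw [← ofReal_integral_eq_lintegral_ofReal hint hnn]
  congr 1
  rw [← intervalIntegral.integral_of_le hle,
    intervalIntegral.integral_comp_sub_right (fun x : ℝ => x ^ β) b]
  simp only [sub_self, add_sub_cancel_left]
  rw [_root_.integral_rpow (Or.inl hβ), Real.zero_rpow (by linarith)]
  ring_nf

lemma lint_Ioc_rpow_left {β : ℝ} (hβ : -1 < β) {a : ℝ} (ha : 0 ≤ a) (b : ℝ) :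
    ∫⁻ s in Ioc (b - a) b, ENNReal.ofReal ((b - s) ^ β)
      = ENNReal.ofReal (a ^ (β + 1) / (β + 1)) := by
  have hle : b - a ≤ b := by linarith
  have hii : IntervalIntegrable (fun x : ℝ => (b - x) ^ β) volume (b - a) b := by
    have h := (intervalIntegral.intervalIntegrable_rpow' (r := β) (a := 0) (b := a) hβ).comp_sub_left b
    simpa using h.symm
  have hint : IntegrableOn (fun x : ℝ => (b - x) ^ β) (Ioc (b - a) b) :=
    (intervalIntegrable_iff_integrableOn_Ioc_of_le hle).1 hii
  have hnn : 0 ≤ᵐ[volume.restrict (Ioc (b - a) b)] fun x : ℝ => (b - x) ^ β := by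
    refine (ae_restrict_iff' measurableSet_Ioc).2 (Filter.Eventually.of_forall fun x hx => ?_)
    exact Real.rpow_nonneg (by linarith [hx.2]) β
  rw [← ofReal_integral_eq_lintegral_ofReal hint hnn]
  congr 1
  rw [← intervalIntegral.integral_of_le hle,
    intervalIntegral.integral_comp_sub_left (fun x : ℝ => x ^ β) b]
  simp only [sub_self, _root_.sub_sub_cancel]
  rw [_root_.integral_rpow (Or.inl hβ), Real.zero_rpow (by linarith)]
  ring_nf

lemma kernel_bound {α : ℝ} (hα1 : -1 < α) (hα0 : α < 0) (E : Set ℝ)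
    {a : ℝ} (ha : 0 < a) (hE : volume E ≤ ENNReal.ofReal a) (t : ℝ) :
    ∫⁻ s in E, ENNReal.ofReal (|t - s| ^ α)
      ≤ ENNReal.ofReal (1 + 2 / (α + 1)) * ENNReal.ofReal (a ^ (α + 1)) := by
  have hα1' : 0 < α + 1 := by linarith
  have hsplit : E ⊆ (Ioc (t - a) t ∪ Ioc t (t + a)) ∪ (E \ Ioo (t - a) (t + a)) := by
    intro x hx
    by_cases hx2 : x ∈ Ioo (t - a) (t + a)
    · rcases le_or_gt x t with h | h
      · exact Or.inl (Or.inl ⟨hx2.1, h⟩)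
      · exact Or.inl (Or.inr ⟨h, hx2.2.le⟩)
    · exact Or.inr ⟨hx, hx2⟩
  have h1 : ∫⁻ s in Ioc (t - a) t, ENNReal.ofReal (|t - s| ^ α)
      = ENNReal.ofReal (a ^ (α + 1) / (α + 1)) := by
    rw [setLIntegral_congr_fun measurableSet_Ioc
      (fun s hs => by
        rw [abs_of_nonneg (sub_nonneg.2 hs.2)])]
    exact lint_Ioc_rpow_left hα1 ha.le t
  have h2 : ∫⁻ s in Ioc t (t + a), ENNReal.ofReal (|t - s| ^ α)
      = ENNReal.ofReal (a ^ (α + 1) / (α + 1)) := by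
    rw [setLIntegral_congr_fun measurableSet_Ioc
      (fun s hs => by
        rw [abs_sub_comm, abs_of_nonneg (sub_nonneg.2 hs.1.le)])]
    exact lint_Ioc_rpow_right hα1 ha.le t
  have h3 : ∫⁻ s in E \ Ioo (t - a) (t + a), ENNReal.ofReal (|t - s| ^ α)
      ≤ ENNReal.ofReal (a ^ α) * ENNReal.ofReal a := by
    have hpt : ∀ s ∈ E \ Ioo (t - a) (t + a),
        ENNReal.ofReal (|t - s| ^ α) ≤ ENNReal.ofReal (a ^ α) := by
      intro s hs
      have habs : a ≤ |t - s| := by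
        have hout : s ≤ t - a ∨ t + a ≤ s := by
          by_contra hcon
          push_neg at hcon
          exact hs.2 ⟨hcon.1, hcon.2⟩
        rcases hout with h | h
        · calc a ≤ t - s := by linarith
            _ ≤ |t - s| := le_abs_self _
        · calc a ≤ s - t := by linarith
            _ ≤ |t - s| := by rw [abs_sub_comm]; exact le_abs_self _
      exact ENNReal.ofReal_le_ofReal (Real.rpow_le_rpow_of_nonpos ha habs hα0.le)
    calc ∫⁻ s in E \ Ioo (t - a) (t + a), ENNReal.ofReal (|t - s| ^ α)
        ≤ ∫⁻ _ in E \ Ioo (t - a) (t + a), ENNReal.ofReal (a ^ α) :=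
          setLIntegral_mono measurable_const hpt
      _ = ENNReal.ofReal (a ^ α) * volume (E \ Ioo (t - a) (t + a)) := setLIntegral_const _ _
      _ ≤ ENNReal.ofReal (a ^ α) * ENNReal.ofReal a := by
          gcongr
          exact le_trans (measure_mono diff_subset) hE
  calc ∫⁻ s in E, ENNReal.ofReal (|t - s| ^ α)
      ≤ ∫⁻ s in (Ioc (t - a) t ∪ Ioc t (t + a)) ∪ (E \ Ioo (t - a) (t + a)),
          ENNReal.ofReal (|t - s| ^ α) := lintegral_mono_set hsplit
    _ ≤ (∫⁻ s in Ioc (t - a) t ∪ Ioc t (t + a), ENNReal.ofReal (|t - s| ^ α))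
          + ∫⁻ s in E \ Ioo (t - a) (t + a), ENNReal.ofReal (|t - s| ^ α) :=
        lintegral_union_le _ _ _
    _ ≤ ((∫⁻ s in Ioc (t - a) t, ENNReal.ofReal (|t - s| ^ α))
          + ∫⁻ s in Ioc t (t + a), ENNReal.ofReal (|t - s| ^ α))
          + ∫⁻ s in E \ Ioo (t - a) (t + a), ENNReal.ofReal (|t - s| ^ α) := by
        gcongr
        exact lintegral_union_le _ _ _
    _ ≤ (ENNReal.ofReal (a ^ (α + 1) / (α + 1)) + ENNReal.ofReal (a ^ (α + 1) / (α + 1)))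
          + ENNReal.ofReal (a ^ α) * ENNReal.ofReal a := by
        rw [h1, h2]; gcongr
    _ = ENNReal.ofReal (1 + 2 / (α + 1)) * ENNReal.ofReal (a ^ (α + 1)) := by
        rw [← ENNReal.ofReal_mul (Real.rpow_nonneg ha.le α), ← Real.rpow_add_one ha.ne' α,
          ← ENNReal.ofReal_add (by positivity) (by positivity),
          ← ENNReal.ofReal_add (by positivity) (Real.rpow_nonneg ha.le _),
          ← ENNReal.ofReal_mul (by positivity)]
        congr 1
        field_simp
        ring

end AbsHAux

set_option maxHeartbeats 1000000 in
/-- For every Hurst parameter `H ∈ (1/2, 1)` and every `T > 0`, if `ψ : [0,T] → ℝ` is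
measurable with `∫₀ᵀ |ψ s|^{1/H} ds < ∞` (i.e. `ψ ∈ L^{1/H}([0,T])`), then
`H(2H−1) ∫₀ᵀ ∫₀ᵀ |ψ s| |ψ t| |t−s|^{2H−2} ds dt < ∞`, i.e. `ψ` lies in the space `|𝓗|`. -/
theorem Lp_one_div_H_subset_absH
    (H T : ℝ) (hH : H ∈ Set.Ioo (1/2 : ℝ) 1) (hT : 0 < T)
    (ψ : ℝ → ℝ) (hψ : Measurable ψ)
    (hLp : (∫⁻ s in Icc (0:ℝ) T, ENNReal.ofReal (|ψ s| ^ (1 / H))) < ⊤) :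
    ENNReal.ofReal (H * (2 * H - 1)) *
        (∫⁻ t in Icc (0:ℝ) T, ∫⁻ s in Icc (0:ℝ) T,
          ENNReal.ofReal (|ψ s| * |ψ t| * |t - s| ^ (2 * H - 2))) < ⊤ := by
  obtain ⟨hH1, hH2⟩ := hH
  have hH0 : (0:ℝ) < H := by linarith
  have hγ0 : (0:ℝ) < 2 * H - 1 := by linarith
  set α : ℝ := 2 * H - 2 with hα
  set γ : ℝ := 2 * H - 1 with hγ
  have hα1 : (-1:ℝ) < α := by rw [hα]; linarith
  have hα0 : α < 0 := by rw [hα]; linarith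
  have hαγ : α + 1 = γ := by rw [hα, hγ]; ring
  set p : ℝ := 1 / H with hp
  have hp0 : 0 < p := by positivity
  have hp1 : 1 < p := by rw [hp, lt_div_iff₀ hH0]; linarith
  set q : ℝ := p * γ with hq
  have hq0 : 0 < q := by positivity
  have hq1 : q < 1 := by
    rw [hq, hp, hγ, div_mul_eq_mul_div, div_lt_one hH0]; nlinarith
  have hpq : 1 - q = p - 1 := by rw [hq, hp, hγ]; field_simp; ring
  set A : Set ℝ := Icc (0:ℝ) T with hA
  have hAm : MeasurableSet A := measurableSet_Icc
  have hf : Measurable (fun x : ℝ => |ψ x|) := hψ.abs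
  set Np : ℝ≥0∞ := ∫⁻ s in A, ENNReal.ofReal (|ψ s| ^ p) with hNp
  have hNpt : Np ≠ ⊤ := hLp.ne
  -- basic objects
  set g : ℝ → ℝ → ℝ≥0∞ := fun r x => if r < |ψ x| then 1 else 0 with hg
  have hgm : Measurable (fun z : ℝ × ℝ => g z.1 z.2) := by
    simp only [hg]
    exact Measurable.ite (measurableSet_lt measurable_fst (hf.comp measurable_snd))
      measurable_const measurable_const
  have hgnetop : ∀ r x, g r x ≠ ⊤ := by
    intro r x; simp only [hg]; split <;> simp
  set K : ℝ → ℝ → ℝ≥0∞ := fun t s => ENNReal.ofReal (|t - s| ^ α) with hK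
  have hKm : Measurable (fun z : ℝ × ℝ => K z.1 z.2) := by
    simp only [hK]
    exact ((measurable_fst.sub measurable_snd).abs.pow measurable_const).ennreal_ofReal
  set m : ℝ → ℝ≥0∞ := fun r => volume (A ∩ {x | r < |ψ x|}) with hm
  have hsetm : ∀ r : ℝ, MeasurableSet {x : ℝ | r < |ψ x|} :=
    fun r => measurableSet_lt measurable_const hf
  have hmA : ∀ r, m r = ∫⁻ x in A, g r x := by
    intro r
    have h1 : (fun x => g r x) = ({x : ℝ | r < |ψ x|}).indicator 1 := by
      funext x; by_cases h : r < |ψ x| <;> simp [hg, h, Set.indicator_apply]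
    rw [h1, lintegral_indicator_one (hsetm r), Measure.restrict_apply (hsetm r), Set.inter_comm,
      hm]
  have hAfin : volume A < ⊤ := by rw [hA, Real.volume_Icc]; exact ofReal_lt_top
  have hmfin : ∀ r, m r ≠ ⊤ :=
    fun r => ((measure_mono Set.inter_subset_left).trans_lt hAfin).ne
  have hmmeas : Measurable m := by
    have h1 : m = fun r => ∫⁻ x in A, g r x := funext hmA
    rw [h1]
    exact Measurable.lintegral_prod_right' (f := fun z : ℝ × ℝ => g z.1 z.2) hgm
  -- layer cake pointwise
  have hlayer : ∀ x : ℝ, ∫⁻ r in Ioi (0:ℝ), g r x = ENNReal.ofReal (|ψ x|) := by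
    intro x
    have h1 : (fun r : ℝ => g r x) = (Iio (|ψ x|)).indicator 1 := by
      funext r; by_cases h : r < |ψ x| <;> simp [hg, h, Set.indicator_apply]
    rw [h1, lintegral_indicator_one measurableSet_Iio,
      Measure.restrict_apply measurableSet_Iio, Set.inter_comm, Set.Ioi_inter_Iio,
      Real.volume_Ioo, sub_zero]
  -- S and its bounds
  set S : ℝ → ℝ → ℝ≥0∞ := fun r t => ∫⁻ s in A, g r s * K t s with hS
  have hSm : Measurable (fun z : ℝ × ℝ => S z.1 z.2) := by
    apply Measurable.lintegral_prod_right'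
      (f := fun w : (ℝ × ℝ) × ℝ => g w.1.1 w.2 * K w.1.2 w.2)
    exact (hgm.comp (measurable_fst.fst.prodMk measurable_snd)).mul
      (hKm.comp (measurable_fst.snd.prodMk measurable_snd))
  have hindic : ∀ (r : ℝ) (F : ℝ → ℝ≥0∞),
      (∫⁻ x in A, g r x * F x) = ∫⁻ x in A ∩ {y : ℝ | r < |ψ y|}, F x := by
    intro r F
    have h1 : (fun x => g r x * F x) = fun x => ({y : ℝ | r < |ψ y|}).indicator F x := by
      funext x; by_cases h : r < |ψ x| <;> simp [hg, h, Set.indicator_apply]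
    rw [h1, lintegral_indicator (hsetm r), Measure.restrict_restrict (hsetm r), Set.inter_comm]
  set C1 : ℝ≥0∞ := ENNReal.ofReal (1 + 2 / γ) with hC1
  have hSle : ∀ r t, S r t ≤ C1 * (m r) ^ γ := by
    intro r t
    rw [hS]
    simp only
    rw [hindic r (fun s => K t s)]
    rcases eq_or_ne (m r) 0 with h0 | h0
    · rw [setLIntegral_measure_zero _ _ (by rw [hm] at h0; exact h0)]
      exact zero_le
    · have ha0 : 0 < (m r).toReal := ENNReal.toReal_pos h0 (hmfin r)
      have hva : volume (A ∩ {y : ℝ | r < |ψ y|}) ≤ ENNReal.ofReal ((m r).toReal) := by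
        rw [ENNReal.ofReal_toReal (hmfin r), hm]
      have hb := AbsHAux.kernel_bound hα1 hα0 _ ha0 hva t
      refine le_trans (le_of_eq ?_) (hb.trans (le_of_eq ?_))
      · simp only [hK]
      · rw [hαγ, hC1, ← ENNReal.ofReal_rpow_of_pos ha0, ENNReal.ofReal_toReal (hmfin r)]
  have hSle2 : ∀ r s, (∫⁻ t in A, g r t * K t s) ≤ C1 * (m r) ^ γ := by
    intro r s
    rw [hindic r (fun t => K t s)]
    rcases eq_or_ne (m r) 0 with h0 | h0
    · rw [setLIntegral_measure_zero _ _ (by rw [hm] at h0; exact h0)]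
      exact zero_le
    · have ha0 : 0 < (m r).toReal := ENNReal.toReal_pos h0 (hmfin r)
      have hva : volume (A ∩ {y : ℝ | r < |ψ y|}) ≤ ENNReal.ofReal ((m r).toReal) := by
        rw [ENNReal.ofReal_toReal (hmfin r), hm]
      have hb := AbsHAux.kernel_bound hα1 hα0 (A ∩ {y : ℝ | r < |ψ y|}) ha0 hva s
      have hcongr : (∫⁻ t in A ∩ {y : ℝ | r < |ψ y|}, K t s)
          = ∫⁻ t in A ∩ {y : ℝ | r < |ψ y|}, ENNReal.ofReal (|s - t| ^ α) := by
        apply lintegral_congr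
        intro t
        rw [hK]
        simp only
        rw [abs_sub_comm]
      rw [hcongr]
      refine hb.trans (le_of_eq ?_)
      rw [hαγ, hC1, ← ENNReal.ofReal_rpow_of_pos ha0, ENNReal.ofReal_toReal (hmfin r)]
  -- G
  set G : ℝ → ℝ → ℝ≥0∞ := fun l u => ∫⁻ t in A, g u t * S l t with hG
  have hGm : Measurable (fun z : ℝ × ℝ => G z.1 z.2) := by
    simp only [hG]
    apply Measurable.lintegral_prod_right'
      (f := fun w : (ℝ × ℝ) × ℝ => g w.1.2 w.2 * S w.1.1 w.2)
    exact (hgm.comp (measurable_fst.snd.prodMk measurable_snd)).mul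
      (hSm.comp (measurable_fst.fst.prodMk measurable_snd))
  -- the main identity
  have key : (∫⁻ t in A, ∫⁻ s in A,
        ENNReal.ofReal (|ψ s|) * ENNReal.ofReal (|ψ t|) * K t s)
      = ∫⁻ u in Ioi (0:ℝ), ∫⁻ l in Ioi (0:ℝ), G l u := by
    have hQm : Measurable (fun t : ℝ => ∫⁻ l in Ioi (0:ℝ), S l t) :=
      Measurable.lintegral_prod_right' (f := fun w : ℝ × ℝ => S w.2 w.1)
        (hSm.comp (measurable_snd.prodMk measurable_fst))
    have hP : ∀ t : ℝ, (∫⁻ s in A, ENNReal.ofReal (|ψ s|) * K t s)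
        = ∫⁻ l in Ioi (0:ℝ), S l t := by
      intro t
      have h1 : ∀ s : ℝ, ENNReal.ofReal (|ψ s|) * K t s
          = ∫⁻ l in Ioi (0:ℝ), g l s * K t s := by
        intro s
        rw [← hlayer s, lintegral_mul_const' (K t s) _ ofReal_ne_top]
      rw [lintegral_congr h1]
      exact lintegral_lintegral_swap
        (((hgm.comp (measurable_snd.prodMk measurable_fst)).mul
          (hKm.comp (measurable_const.prodMk measurable_fst))).aemeasurable)
    calc (∫⁻ t in A, ∫⁻ s in A, ENNReal.ofReal (|ψ s|) * ENNReal.ofReal (|ψ t|) * K t s)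
        = ∫⁻ t in A, ENNReal.ofReal (|ψ t|) * ∫⁻ l in Ioi (0:ℝ), S l t := by
          apply lintegral_congr
          intro t
          rw [← hP t, ← lintegral_const_mul' _ _ (ofReal_ne_top (r := |ψ t|))]
          apply lintegral_congr
          intro s
          ring
      _ = ∫⁻ t in A, ∫⁻ u in Ioi (0:ℝ), g u t * ∫⁻ l in Ioi (0:ℝ), S l t := by
          apply lintegral_congr
          intro t
          have hgut : Measurable (fun u : ℝ => g u t) :=
            hgm.comp (measurable_id.prodMk measurable_const)
          rw [← hlayer t, lintegral_mul_const'' _ hgut.aemeasurable]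
      _ = ∫⁻ u in Ioi (0:ℝ), ∫⁻ t in A, g u t * ∫⁻ l in Ioi (0:ℝ), S l t := by
          exact lintegral_lintegral_swap
            (((hgm.comp (measurable_snd.prodMk measurable_fst)).mul
              (hQm.comp measurable_fst)).aemeasurable)
      _ = ∫⁻ u in Ioi (0:ℝ), ∫⁻ l in Ioi (0:ℝ), G l u := by
          apply lintegral_congr
          intro u
          have h2 : ∀ t : ℝ, g u t * (∫⁻ l in Ioi (0:ℝ), S l t)
              = ∫⁻ l in Ioi (0:ℝ), g u t * S l t := by
            intro t
            rw [lintegral_const_mul' _ _ (hgnetop u t)]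
          rw [lintegral_congr h2]
          exact lintegral_lintegral_swap
            (((hgm.comp (measurable_const.prodMk measurable_fst)).mul
              (hSm.comp (measurable_snd.prodMk measurable_fst))).aemeasurable)
  -- pointwise bounds on G
  have hGb1 : ∀ l u, G l u ≤ m u * (C1 * (m l) ^ γ) := by
    intro l u
    have hne : C1 * (m l) ^ γ ≠ ⊤ :=
      mul_ne_top ofReal_ne_top (rpow_ne_top_of_nonneg hγ0.le (hmfin l))
    calc G l u ≤ ∫⁻ t in A, g u t * (C1 * (m l) ^ γ) :=
          lintegral_mono fun t => mul_le_mul_right (hSle l t) _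
      _ = (∫⁻ t in A, g u t) * (C1 * (m l) ^ γ) := lintegral_mul_const' _ _ hne
      _ = m u * (C1 * (m l) ^ γ) := by rw [← hmA]
  have hGb2 : ∀ l u, G l u ≤ m l * (C1 * (m u) ^ γ) := by
    intro l u
    have hswap : G l u = ∫⁻ s in A, g l s * ∫⁻ t in A, g u t * K t s := by
      rw [hG]
      simp only
      have h1 : ∀ t : ℝ, g u t * S l t = ∫⁻ s in A, g u t * (g l s * K t s) := by
        intro t
        rw [hS]
        simp only
        rw [lintegral_const_mul' _ _ (hgnetop u t)]
      rw [lintegral_congr h1]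
      rw [lintegral_lintegral_swap
        (((hgm.comp (measurable_const.prodMk measurable_fst)).mul
          ((hgm.comp (measurable_const.prodMk measurable_snd)).mul hKm)).aemeasurable)]
      apply lintegral_congr
      intro s
      rw [← lintegral_const_mul' _ _ (hgnetop l s)]
      apply lintegral_congr
      intro t
      ring
    have hne : C1 * (m u) ^ γ ≠ ⊤ :=
      mul_ne_top ofReal_ne_top (rpow_ne_top_of_nonneg hγ0.le (hmfin u))
    rw [hswap]
    calc (∫⁻ s in A, g l s * ∫⁻ t in A, g u t * K t s)
        ≤ ∫⁻ s in A, g l s * (C1 * (m u) ^ γ) :=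
          lintegral_mono fun s => mul_le_mul_right (hSle2 u s) _
      _ = (∫⁻ s in A, g l s) * (C1 * (m u) ^ γ) := lintegral_mul_const' _ _ hne
      _ = m l * (C1 * (m u) ^ γ) := by rw [← hmA]
  -- Chebyshev
  have hcheb : ∀ r : ℝ, 0 < r → m r ≤ Np * (ENNReal.ofReal r) ^ (-p) := by
    intro r hr
    have hmeasF : AEMeasurable (fun s : ℝ => ENNReal.ofReal (|ψ s| ^ p)) (volume.restrict A) :=
      ((hf.pow measurable_const).ennreal_ofReal).aemeasurable
    have h1 := mul_meas_ge_le_lintegral₀ hmeasF (ENNReal.ofReal (r ^ p))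
    have hsm : MeasurableSet {x : ℝ | ENNReal.ofReal (r ^ p) ≤ ENNReal.ofReal (|ψ x| ^ p)} :=
      measurableSet_le measurable_const ((hf.pow measurable_const).ennreal_ofReal)
    have h2 : m r ≤ (volume.restrict A)
        {x : ℝ | ENNReal.ofReal (r ^ p) ≤ ENNReal.ofReal (|ψ x| ^ p)} := by
      rw [hm, Measure.restrict_apply hsm]
      apply measure_mono
      rintro x ⟨hxA, hx⟩
      exact ⟨ENNReal.ofReal_le_ofReal (Real.rpow_le_rpow hr.le (le_of_lt hx) hp0.le), hxA⟩
    have h3 : ENNReal.ofReal (r ^ p) * m r ≤ Np :=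
      le_trans (mul_le_mul_right h2 _) h1
    have hr0 : (ENNReal.ofReal r) ^ p ≠ 0 := by
      rw [ENNReal.ofReal_rpow_of_pos hr]
      exact (ofReal_pos.2 (Real.rpow_pos_of_pos hr p)).ne'
    have hrt : (ENNReal.ofReal r) ^ p ≠ ⊤ := by
      rw [ENNReal.ofReal_rpow_of_pos hr]; exact ofReal_ne_top
    rw [ENNReal.rpow_neg, ← div_eq_mul_inv]
    rw [← ENNReal.ofReal_rpow_of_pos hr] at h3
    exact (ENNReal.le_div_iff_mul_le (Or.inl hr0) (Or.inl hrt)).2 (by rwa [mul_comm])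
  have hNpg : Np ^ γ ≠ ⊤ := rpow_ne_top_of_nonneg hγ0.le hNpt
  have hDle : ∀ r : ℝ, 0 < r → (m r) ^ γ ≤ Np ^ γ * ENNReal.ofReal (r ^ (-q)) := by
    intro r hr
    calc (m r) ^ γ ≤ (Np * (ENNReal.ofReal r) ^ (-p)) ^ γ :=
        ENNReal.rpow_le_rpow (hcheb r hr) hγ0.le
      _ = Np ^ γ * ((ENNReal.ofReal r) ^ (-p)) ^ γ := ENNReal.mul_rpow_of_nonneg _ _ hγ0.le
      _ = Np ^ γ * (ENNReal.ofReal r) ^ (-q) := by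
          rw [← ENNReal.rpow_mul]
          congr 1
          rw [hq]; ring
      _ = Np ^ γ * ENNReal.ofReal (r ^ (-q)) := by
          rw [ENNReal.ofReal_rpow_of_pos hr]
  have hInner : ∀ c : ℝ, 0 < c → (∫⁻ l in Ioc (0:ℝ) c, (m l) ^ γ)
      ≤ Np ^ γ * (ENNReal.ofReal (c ^ (p - 1)) * ENNReal.ofReal (1 / (1 - q))) := by
    intro c hc
    have h1 : (∫⁻ l in Ioc (0:ℝ) c, (m l) ^ γ)
        ≤ ∫⁻ l in Ioc (0:ℝ) c, Np ^ γ * ENNReal.ofReal (l ^ (-q)) := by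
      refine setLIntegral_mono
        ((measurable_const.mul ((measurable_id.pow measurable_const).ennreal_ofReal))) ?_
      intro l hl
      exact hDle l hl.1
    refine h1.trans (le_of_eq ?_)
    rw [lintegral_const_mul' _ _ hNpg]
    congr 1
    have h2 := AbsHAux.lint_Ioc_rpow_right (β := -q) (by linarith) (a := c) hc.le 0
    simp only [zero_add, sub_zero] at h2
    rw [h2, show -q + 1 = 1 - q by ring, hpq]
    rw [div_eq_mul_one_div, ENNReal.ofReal_mul (Real.rpow_nonneg hc.le _)]
  -- the combined per-scale bound
  set c2 : ℝ≥0∞ := C1 * Np ^ γ * ENNReal.ofReal (1 / (1 - q)) with hc2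
  have hc2top : c2 ≠ ⊤ := by
    rw [hc2]
    exact mul_ne_top (mul_ne_top ofReal_ne_top hNpg) ofReal_ne_top
  have hboundIoc : ∀ u : ℝ, 0 < u →
      (∫⁻ l in Ioc (0:ℝ) u, G l u) ≤ m u * ENNReal.ofReal (u ^ (p - 1)) * c2 := by
    intro u hu
    have hne : m u * C1 ≠ ⊤ := mul_ne_top (hmfin u) ofReal_ne_top
    calc (∫⁻ l in Ioc (0:ℝ) u, G l u)
        ≤ ∫⁻ l in Ioc (0:ℝ) u, m u * C1 * (m l) ^ γ := by
          refine lintegral_mono fun l => ?_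
          rw [mul_assoc]
          exact hGb1 l u
      _ = m u * C1 * ∫⁻ l in Ioc (0:ℝ) u, (m l) ^ γ := lintegral_const_mul' _ _ hne
      _ ≤ m u * C1 * (Np ^ γ * (ENNReal.ofReal (u ^ (p - 1)) * ENNReal.ofReal (1 / (1 - q)))) :=
          mul_le_mul_right (hInner u hu) _
      _ = m u * ENNReal.ofReal (u ^ (p - 1)) * c2 := by rw [hc2]; ring
  have hboundIoo : ∀ l : ℝ, 0 < l →
      (∫⁻ u in Ioo (0:ℝ) l, G l u) ≤ m l * ENNReal.ofReal (l ^ (p - 1)) * c2 := by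
    intro l hl
    have hne : m l * C1 ≠ ⊤ := mul_ne_top (hmfin l) ofReal_ne_top
    calc (∫⁻ u in Ioo (0:ℝ) l, G l u)
        ≤ ∫⁻ u in Ioc (0:ℝ) l, G l u := lintegral_mono_set Ioo_subset_Ioc_self
      _ ≤ ∫⁻ u in Ioc (0:ℝ) l, m l * C1 * (m u) ^ γ := by
          refine lintegral_mono fun u => ?_
          rw [mul_assoc]
          exact hGb2 l u
      _ = m l * C1 * ∫⁻ u in Ioc (0:ℝ) l, (m u) ^ γ := lintegral_const_mul' _ _ hne
      _ ≤ m l * C1 * (Np ^ γ * (ENNReal.ofReal (l ^ (p - 1)) * ENNReal.ofReal (1 / (1 - q)))) :=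
          mul_le_mul_right (hInner l hl) _
      _ = m l * ENNReal.ofReal (l ^ (p - 1)) * c2 := by rw [hc2]; ring
  -- the weighted tail integral is finite (layer cake)
  set W : ℝ → ℝ≥0∞ := fun r => m r * ENNReal.ofReal (r ^ (p - 1)) * c2 with hW
  have hWm : Measurable W := by
    rw [hW]
    exact ((hmmeas.mul ((measurable_id.pow measurable_const).ennreal_ofReal)).mul_const _)
  have hWfin : (∫⁻ r in Ioi (0:ℝ), W r) < ⊤ := by
    have hkey := lintegral_rpow_eq_lintegral_meas_le_mul (μ := volume.restrict A)
      (f := fun x => |ψ x|) (Filter.Eventually.of_forall fun x => abs_nonneg _)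
      hf.aemeasurable hp0
    have hIfin : (∫⁻ r in Ioi (0:ℝ),
        (volume.restrict A) {a : ℝ | r ≤ |ψ a|} * ENNReal.ofReal (r ^ (p - 1))) < ⊤ := by
      by_contra hcon
      push_neg at hcon
      have htop := top_le_iff.1 hcon
      rw [htop, ENNReal.mul_top (by positivity : ENNReal.ofReal p ≠ 0)] at hkey
      exact hNpt hkey
    have hle : (∫⁻ r in Ioi (0:ℝ), m r * ENNReal.ofReal (r ^ (p - 1)))
        ≤ ∫⁻ r in Ioi (0:ℝ),
          (volume.restrict A) {a : ℝ | r ≤ |ψ a|} * ENNReal.ofReal (r ^ (p - 1)) := by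
      refine lintegral_mono fun r => mul_le_mul_left ?_ _
      rw [hm, Measure.restrict_apply (measurableSet_le measurable_const hf)]
      apply measure_mono
      rintro x ⟨hxA, hx⟩
      exact ⟨(le_of_lt hx : r ≤ |ψ x|), hxA⟩
    have h3 : (∫⁻ r in Ioi (0:ℝ), W r)
        = (∫⁻ r in Ioi (0:ℝ), m r * ENNReal.ofReal (r ^ (p - 1))) * c2 := by
      rw [hW]
      exact lintegral_mul_const' _ _ hc2top
    rw [h3]
    exact mul_lt_top (hle.trans_lt hIfin) hc2top.lt_top
  -- split and finish
  have hΦ : Measurable (fun w : ℝ × ℝ => (Ioi w.1).indicator (fun l => G l w.1) w.2) := by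
    have heq : (fun w : ℝ × ℝ => (Ioi w.1).indicator (fun l => G l w.1) w.2)
        = fun w : ℝ × ℝ => Set.indicator {z : ℝ × ℝ | z.1 < z.2} (fun z => G z.2 z.1) w := by
      funext w
      by_cases h : w.1 < w.2 <;> simp [Set.indicator_apply, h, Set.mem_Ioi]
    rw [heq]
    exact Measurable.indicator (hGm.comp (measurable_snd.prodMk measurable_fst))
      (measurableSet_lt measurable_fst measurable_snd)
  have hY : (∫⁻ u in Ioi (0:ℝ), ∫⁻ l in Ioi u, G l u) ≤ ∫⁻ l in Ioi (0:ℝ), W l := by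
    have h1 : (∫⁻ u in Ioi (0:ℝ), ∫⁻ l in Ioi u, G l u)
        = ∫⁻ u in Ioi (0:ℝ), ∫⁻ l in Ioi (0:ℝ), (Ioi u).indicator (fun l => G l u) l := by
      refine setLIntegral_congr_fun measurableSet_Ioi
        (fun u hu => ?_)
      rw [lintegral_indicator measurableSet_Ioi, Measure.restrict_restrict measurableSet_Ioi,
        Set.inter_eq_left.2 (Ioi_subset_Ioi (le_of_lt hu))]
    rw [h1, lintegral_lintegral_swap (hΦ.aemeasurable)]
    refine lintegral_mono_ae ((ae_restrict_iff' measurableSet_Ioi).2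
      (Filter.Eventually.of_forall fun l hl => ?_))
    have h2 : (fun u : ℝ => (Ioi u).indicator (fun l' => G l' u) l)
        = fun u : ℝ => (Iio l).indicator (fun u' => G l u') u := by
      funext u
      by_cases h : u < l <;> simp [Set.indicator_apply, h, Set.mem_Ioi, Set.mem_Iio]
    rw [h2, lintegral_indicator measurableSet_Iio, Measure.restrict_restrict measurableSet_Iio,
      show Iio l ∩ Ioi 0 = Ioo 0 l by rw [Set.inter_comm]; exact Set.Ioi_inter_Iio]
    exact hboundIoo l hl
  have hX : (∫⁻ u in Ioi (0:ℝ), ∫⁻ l in Ioi (0:ℝ), G l u)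
      ≤ (∫⁻ u in Ioi (0:ℝ), W u) + ∫⁻ u in Ioi (0:ℝ), ∫⁻ l in Ioi u, G l u := by
    have h1 : (∫⁻ u in Ioi (0:ℝ), ∫⁻ l in Ioi (0:ℝ), G l u)
        ≤ ∫⁻ u in Ioi (0:ℝ), (W u + ∫⁻ l in Ioi u, G l u) := by
      refine lintegral_mono_ae ((ae_restrict_iff' measurableSet_Ioi).2
        (Filter.Eventually.of_forall fun u hu => ?_))
      rw [← Ioc_union_Ioi_eq_Ioi (le_of_lt hu),
        lintegral_union measurableSet_Ioi (Ioc_disjoint_Ioi le_rfl)]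
      exact add_le_add_left (hboundIoc u hu) _
    refine h1.trans (le_of_eq ?_)
    exact lintegral_add_left' hWm.aemeasurable _
  -- conclude
  have hBfin : (∫⁻ t in A, ∫⁻ s in A,
      ENNReal.ofReal (|ψ s|) * ENNReal.ofReal (|ψ t|) * K t s) < ⊤ := by
    rw [key]
    refine lt_of_le_of_lt (hX.trans (add_le_add_right hY _)) ?_
    exact ENNReal.add_lt_top.2 ⟨hWfin, hWfin⟩
  have hgoal : (∫⁻ t in A, ∫⁻ s in A,
        ENNReal.ofReal (|ψ s| * |ψ t| * |t - s| ^ α))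
      = ∫⁻ t in A, ∫⁻ s in A,
        ENNReal.ofReal (|ψ s|) * ENNReal.ofReal (|ψ t|) * K t s := by
    apply lintegral_congr
    intro t
    apply lintegral_congr
    intro s
    rw [hK]
    simp only
    rw [ENNReal.ofReal_mul (mul_nonneg (abs_nonneg _) (abs_nonneg _)),
      ENNReal.ofReal_mul (abs_nonneg _)]
  rw [hgoal]
  exact mul_lt_top ofReal_lt_top hBfin
end
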